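/- Let k be an algebraically closed field of characteristic zero and let φ : ym(3) → sl(2, k) be any morphism of Lie algebras. Then the image of φ is a solvable Lie subalgebra of sl(2, k). Equivalently, if φ is a Lie algebra morphism from the free Lie algebra over k on generators x₁, x₂, x₃ to sl(2, k) satisfying φ(r_j) = 0 for j = 1, 2, 3, then the Lie subalgebra of sl(2, k) given by the range of φ is solvable. -/

import Mathlib

open FreeLieAlgebra

/-- The Yang–Mills relation `r j = ∑ i [xᵢ,[xᵢ,xⱼ]]` in the free Lie algebra on three
generators over `k`. -/
noncomputable def ymRel3 (k : Type*) [Field k] (j : Fin 3) : FreeLieAlgebra k (Fin 3) :=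
  ∑ i : Fin 3, ⁅of k i, ⁅of k i, of k j⁆⁆

namespace Ym3Aux

open LieAlgebra.SpecialLinear

variable {k : Type*} [Field k]

abbrev L2 (k : Type*) [Field k] := ↥(sl (Fin 2) k)

theorem tr0 (x : L2 k) : x.val 1 1 = - x.val 0 0 := by
  have h : Matrix.trace x.val = 0 := x.2
  rw [Matrix.trace_fin_two] at h; linear_combination h

theorem vsmul (a : k) (x : L2 k) : (a • x).val = a • x.val := rfl
theorem vadd (x y : L2 k) : (x + y).val = x.val + y.val := rfl
theorem vsub (x y : L2 k) : (x - y).val = x.val - y.val := rfl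
theorem vzero : (0 : L2 k).val = 0 := rfl

omit [Field k] in
theorem m2ext {K : Type*} {A B : Matrix (Fin 2) (Fin 2) K} (h00 : A 0 0 = B 0 0)
    (h01 : A 0 1 = B 0 1) (h10 : A 1 0 = B 1 0) (h11 : A 1 1 = B 1 1) : A = B := by
  ext i j; fin_cases i <;> fin_cases j <;> assumption

theorem lext {x y : L2 k} (h00 : x.val 0 0 = y.val 0 0) (h01 : x.val 0 1 = y.val 0 1)
    (h10 : x.val 1 0 = y.val 1 0) : x = y :=
  Subtype.ext (m2ext h00 h01 h10 (by rw [tr0, tr0, h00]))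

theorem br (x y : L2 k) (i j : Fin 2) :
    (⁅x,y⁆ : L2 k).val i j = x.val i 0 * y.val 0 j + x.val i 1 * y.val 1 j
      - (y.val i 0 * x.val 0 j + y.val i 1 * x.val 1 j) := by
  show (x.val * y.val - y.val * x.val) i j = _
  simp [Matrix.sub_apply, Matrix.mul_apply, Fin.sum_univ_two]

/-- The trace form on `sl(2,k)`. -/
def Bf (x y : L2 k) : k :=
  2*(x.val 0 0 * y.val 0 0) + x.val 0 1 * y.val 1 0 + x.val 1 0 * y.val 0 1

theorem Bf_symm (x y : L2 k) : Bf x y = Bf y x := by unfold Bf; ring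

theorem Bf_add_left (x y z : L2 k) : Bf (x + y) z = Bf x z + Bf y z := by
  simp only [Bf, vadd, Matrix.add_apply]; ring

theorem Bf_add_right (x y z : L2 k) : Bf x (y + z) = Bf x y + Bf x z := by
  simp only [Bf, vadd, Matrix.add_apply]; ring

theorem Bf_sub_left (x y z : L2 k) : Bf (x - y) z = Bf x z - Bf y z := by
  simp only [Bf, vsub, Matrix.sub_apply]; ring

theorem Bf_smul_left (a : k) (x z : L2 k) : Bf (a • x) z = a * Bf x z := by
  simp only [Bf, vsmul, Matrix.smul_apply, smul_eq_mul]; ring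

theorem Bf_smul_right (a : k) (x z : L2 k) : Bf x (a • z) = a * Bf x z := by
  simp only [Bf, vsmul, Matrix.smul_apply, smul_eq_mul]; ring

theorem Bf_zero_left (z : L2 k) : Bf 0 z = 0 := by
  simp only [Bf, vzero, Matrix.zero_apply]; ring

/-- The fundamental `sl₂` identity. -/
theorem I1 (x y z : L2 k) : ⁅x,⁅y,z⁆⁆ = (2 * Bf x y) • z - (2 * Bf x z) • y := by
  apply lext <;>
    simp only [br, Bf, vsmul, vsub, Matrix.sub_apply, Matrix.smul_apply, smul_eq_mul, tr0] <;>
    ring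

theorem wA (x y z : L2 k) : Bf y ⁅x,z⁆ = - Bf x ⁅y,z⁆ := by
  simp only [Bf, br, tr0]; ring

theorem wB (x y z : L2 k) : Bf z ⁅x,y⁆ = Bf x ⁅y,z⁆ := by
  simp only [Bf, br, tr0]; ring

theorem wC (x z : L2 k) : Bf x ⁅x,z⁆ = 0 := by
  simp only [Bf, br, tr0]; ring

theorem wD (x y : L2 k) : Bf y ⁅x,y⁆ = 0 := by
  simp only [Bf, br, tr0]; ring

/-- Square of the triple product against the Gram determinant. -/
theorem ID2 (x y z : L2 k) :
    (Bf x ⁅y,z⁆)^2 =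
      -2 * (Bf x x * (Bf y y * Bf z z - Bf y z ^ 2)
        - Bf x y * (Bf x y * Bf z z - Bf x z * Bf y z)
        + Bf x z * (Bf x y * Bf y z - Bf x z * Bf y y)) := by
  simp only [Bf, br, tr0]; ring

/-- Norm of a bracket. -/
theorem ID3 (x y : L2 k) : Bf ⁅x,y⁆ ⁅x,y⁆ = 2 * ((Bf x y)^2 - Bf x x * Bf y y) := by
  simp only [Bf, br, tr0]; ring


variable [CharZero k]

/-- If the triple product vanishes, the three elements are linearly dependent. -/
theorem dep (x y z : L2 k) (h : Bf x ⁅y,z⁆ = 0) :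
    ∃ t : Fin 3 → k, t ≠ 0 ∧ t 0 • x + t 1 • y + t 2 • z = 0 := by
  set M : Matrix (Fin 3) (Fin 3) k :=
    !![x.val 0 0, x.val 0 1, x.val 1 0;
       y.val 0 0, y.val 0 1, y.val 1 0;
       z.val 0 0, z.val 0 1, z.val 1 0] with hM
  have hdet : M.det = 0 := by
    have e : 2 * M.det = Bf x ⁅y,z⁆ := by
      simp [hM, Matrix.det_fin_three, Bf, br, tr0]
      ring
    have h2 : (2:k) * M.det = 0 := by rw [e, h]
    exact (mul_eq_zero.1 h2).resolve_left two_ne_zero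
  obtain ⟨v, hv0, hv⟩ := Matrix.exists_vecMul_eq_zero_iff.2 hdet
  refine ⟨v, hv0, ?_⟩
  have c0 := congrFun hv 0
  have c1 := congrFun hv 1
  have c2 := congrFun hv 2
  simp [hM, Matrix.vecMul, dotProduct, Fin.sum_univ_three] at c0 c1 c2
  apply lext <;>
    simp only [vadd, vsmul, vzero, Matrix.add_apply, Matrix.smul_apply, smul_eq_mul,
      Matrix.zero_apply]
  · linear_combination c0
  · linear_combination c1
  · linear_combination c2

theorem solve3 {t0 t1 t2 : k} (h2 : t2 ≠ 0) {x y z : L2 k} (h : t0 • x + t1 • y + t2 • z = 0) :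
    z = (-t2⁻¹ * t0) • x + (-t2⁻¹ * t1) • y := by
  have h' : z = t2⁻¹ • (t2 • z) := by rw [smul_smul, inv_mul_cancel₀ h2, one_smul]
  have h'' : t2 • z = (-t0) • x + (-t1) • y := by
    linear_combination (norm := module) h
  rw [h', h'']
  module

theorem indep {x y : L2 k} (hq : Bf ⁅x,y⁆ ⁅x,y⁆ ≠ 0) {c d : k} (h : c • x + d • y = 0) :
    c = 0 ∧ d = 0 := by
  have hy : y ≠ 0 := by
    rintro rfl
    rw [lie_zero] at hq
    exact hq (Bf_zero_left _)
  have hc : c = 0 := by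
    by_contra hc
    have hx : x = (-c⁻¹ * d) • y := by
      have h' : x = c⁻¹ • (c • x) := by rw [smul_smul, inv_mul_cancel₀ hc, one_smul]
      have h'' : c • x = (-d) • y := by linear_combination (norm := module) h
      rw [h', h'']; module
    apply hq
    rw [hx, smul_lie, lie_self, smul_zero]
    exact Bf_zero_left _
  refine ⟨hc, ?_⟩
  rw [hc, zero_smul, zero_add] at h
  rcases smul_eq_zero.1 h with h' | h'
  · exact h'
  · exact absurd h' hy


theorem solve2 {t0 t1 : k} (h1 : t1 ≠ 0) {x y : L2 k} (h : t0 • x + t1 • y = 0) :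
    y = (-t1⁻¹ * t0) • x := by
  have h' : y = t1⁻¹ • (t1 • y) := by rw [smul_smul, inv_mul_cancel₀ h1, one_smul]
  have h'' : t1 • y = (-t0) • x := by linear_combination (norm := module) h
  rw [h', h'']; module

/-- The workhorse: a dependent triple satisfying the Yang–Mills relations lies in a
two-generated bracket-closed subspace. -/
theorem step2 (x y z : L2 k) (a b : k) (hz : z = a • x + b • y)
    (h1 : ⁅x,⁅x,x⁆⁆ + ⁅y,⁅y,x⁆⁆ + ⁅z,⁅z,x⁆⁆ = 0)
    (h2 : ⁅x,⁅x,y⁆⁆ + ⁅y,⁅y,y⁆⁆ + ⁅z,⁅z,y⁆⁆ = 0)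
    (h3 : ⁅x,⁅x,z⁆⁆ + ⁅y,⁅y,z⁆⁆ + ⁅z,⁅z,z⁆⁆ = 0) :
    ∃ u v : L2 k, x ∈ Submodule.span k {u, v} ∧ y ∈ Submodule.span k {u, v} ∧
      z ∈ Submodule.span k {u, v} ∧ ⁅u, v⁆ ∈ Submodule.span k {u, v} := by
  by_cases hq : Bf ⁅x,y⁆ ⁅x,y⁆ = 0
  · -- the bracket is isotropic: x, y, ⁅x,y⁆ are linearly dependent
    have h0 : Bf x ⁅y, ⁅x,y⁆⁆ = 0 := by rw [← wB x y ⁅x,y⁆]; exact hq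
    obtain ⟨t, ht0, ht⟩ := dep x y ⁅x,y⁆ h0
    by_cases ht2 : t 2 ≠ 0
    · have hw := solve3 ht2 ht
      exact ⟨x, y, Submodule.mem_span_pair.2 ⟨1, 0, by module⟩,
        Submodule.mem_span_pair.2 ⟨0, 1, by module⟩,
        Submodule.mem_span_pair.2 ⟨a, b, hz.symm⟩,
        Submodule.mem_span_pair.2 ⟨_, _, hw.symm⟩⟩
    · push_neg at ht2
      rw [ht2, zero_smul, add_zero] at ht
      by_cases ht1 : t 1 ≠ 0
      · have hy := solve2 ht1 ht
        refine ⟨x, 0, Submodule.mem_span_pair.2 ⟨1, 0, by module⟩,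
          Submodule.mem_span_pair.2 ⟨-(t 1)⁻¹ * t 0, 0, by rw [hy]; module⟩,
          Submodule.mem_span_pair.2 ⟨a + b * (-(t 1)⁻¹ * t 0), 0, by rw [hz, hy]; module⟩,
          by rw [lie_zero]; exact Submodule.zero_mem _⟩
      · push_neg at ht1
        have ht0' : t 0 ≠ 0 := by
          intro h00
          apply ht0
          funext i
          fin_cases i <;> assumption
        rw [ht1, zero_smul, add_zero] at ht
        have hx0 : x = 0 := by
          rcases smul_eq_zero.1 ht with h' | h'
          · exact absurd h' ht0'
          · exact h'
        refine ⟨y, 0, Submodule.mem_span_pair.2 ⟨0, 0, by rw [hx0]; module⟩,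
          Submodule.mem_span_pair.2 ⟨1, 0, by module⟩,
          Submodule.mem_span_pair.2 ⟨b, 0, by rw [hz, hx0]; module⟩,
          by rw [lie_zero]; exact Submodule.zero_mem _⟩
  · -- the bracket is anisotropic: derive a contradiction from the relations
    exfalso
    rw [I1 x x x, I1 y y x, I1 z z x] at h1
    rw [I1 x x y, I1 y y y, I1 z z y] at h2
    rw [I1 x x z, I1 y y z, I1 z z z] at h3
    rw [hz] at h1 h2 h3
    simp only [Bf_add_left, Bf_add_right, Bf_smul_left, Bf_smul_right,
      show Bf y x = Bf x y from Bf_symm y x] at h1 h2 h3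
    set p := Bf x x with hp
    set r := Bf x y with hr
    set s := Bf y y with hs
    have hv1 : (2*s + 2*a*b*r + 2*b^2*s) • x + (-(2*r) - 2*a*b*p - 2*b^2*r) • y = 0 := by
      linear_combination (norm := module) h1
    have hv2 : (-(2*r) - 2*a^2*r - 2*a*b*s) • x + (2*p + 2*a^2*p + 2*a*b*r) • y = 0 := by
      linear_combination (norm := module) h2
    have hv3 : (2*a*s - 2*b*r) • x + (2*b*p - 2*a*r) • y = 0 := by
      linear_combination (norm := module) h3
    obtain ⟨E1, E2⟩ := indep hq hv1
    obtain ⟨E3, E4⟩ := indep hq hv2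
    obtain ⟨E5, E6⟩ := indep hq hv3
    have F1 : a*s - b*r = 0 := by linear_combination E5 / 2
    have F2 : b*p - a*r = 0 := by linear_combination E6 / 2
    have F3 : r*(1 + a^2 + b^2) = 0 := by
      linear_combination (-1/4 : k) * E2 + (-1/4 : k) * E3 - (a/2) * F2 - (b/2) * F1
    have F4 : p*(1 + a^2 + b^2) = 0 := by linear_combination E4 / 2 + b * F2
    have F5 : s*(1 + a^2 + b^2) = 0 := by linear_combination E1 / 2 + a * F1
    have hg : r^2 - p*s = 0 := by
      linear_combination r*F3 - s*F4 + a*r*F2 + a*p*F1 + b*s*F2 + b*r*F1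
    apply hq
    rw [ID3, ← hp, ← hr, ← hs]
    linear_combination 2 * hg


/-- Any triple satisfying the Yang–Mills relations lies in a two-generated
bracket-closed subspace. -/
theorem main (x y z : L2 k)
    (h1 : ⁅x,⁅x,x⁆⁆ + ⁅y,⁅y,x⁆⁆ + ⁅z,⁅z,x⁆⁆ = 0)
    (h2 : ⁅x,⁅x,y⁆⁆ + ⁅y,⁅y,y⁆⁆ + ⁅z,⁅z,y⁆⁆ = 0)
    (h3 : ⁅x,⁅x,z⁆⁆ + ⁅y,⁅y,z⁆⁆ + ⁅z,⁅z,z⁆⁆ = 0) :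
    ∃ u v : L2 k, x ∈ Submodule.span k {u, v} ∧ y ∈ Submodule.span k {u, v} ∧
      z ∈ Submodule.span k {u, v} ∧ ⁅u, v⁆ ∈ Submodule.span k {u, v} := by
  -- Step A: the triple product d vanishes
  have hd : Bf x ⁅y,z⁆ = 0 := by
    have g1 := h1; have g2 := h2; have g3 := h3
    rw [I1 x x x, I1 y y x, I1 z z x] at g1
    rw [I1 x x y, I1 y y y, I1 z z y] at g2
    rw [I1 x x z, I1 y y z, I1 z z z] at g3
    have A1 := congrArg (fun w => Bf w ⁅y,z⁆) g1
    have A4 := congrArg (fun w => Bf w ⁅x,z⁆) g1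
    have A5 := congrArg (fun w => Bf w ⁅x,y⁆) g1
    have A2 := congrArg (fun w => Bf w ⁅x,z⁆) g2
    have A6 := congrArg (fun w => Bf w ⁅x,y⁆) g2
    have A3 := congrArg (fun w => Bf w ⁅x,y⁆) g3
    simp only [Bf_sub_left, Bf_add_left, Bf_smul_left, Bf_zero_left,
      wC x y, wC x z, wD x y, wD x z, wD y z, wC y z,
      wA x y z, wB x y z,
      show Bf y x = Bf x y from Bf_symm y x,
      show Bf z x = Bf x z from Bf_symm z x,
      show Bf z y = Bf y z from Bf_symm z y] at A1 A2 A3 A4 A5 A6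
    -- products of Gram entries with d vanish
    have P12 : Bf x y * Bf x ⁅y,z⁆ = 0 := by linear_combination A4 / 2
    have P13 : Bf x z * Bf x ⁅y,z⁆ = 0 := by linear_combination -A5 / 2
    have P23 : Bf y z * Bf x ⁅y,z⁆ = 0 := by linear_combination -A6 / 2
    have P11 : Bf x x * Bf x ⁅y,z⁆ = 0 := by linear_combination (A3 - A2 - A1) / 4
    have P22 : Bf y y * Bf x ⁅y,z⁆ = 0 := by linear_combination (A1 + A3 + A2) / 4
    have P33 : Bf z z * Bf x ⁅y,z⁆ = 0 := by linear_combination (A1 - A3 - A2) / 4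
    have hd3 : (Bf x ⁅y,z⁆)^3 = 0 := by
      linear_combination Bf x ⁅y,z⁆ * ID2 x y z
        - 2*(Bf y y * Bf z z - Bf y z^2) * P11
        + 2*(Bf x y * Bf z z - Bf x z * Bf y z) * P12
        - 2*(Bf x y * Bf y z - Bf x z * Bf y y) * P13
    exact pow_eq_zero_iff (by norm_num : (3:ℕ) ≠ 0) |>.mp hd3
  obtain ⟨t, ht0, ht⟩ := dep x y z hd
  by_cases ht2 : t 2 ≠ 0
  · exact step2 x y z _ _ (solve3 ht2 ht) h1 h2 h3
  · push_neg at ht2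
    rw [ht2, zero_smul, add_zero] at ht
    by_cases ht1 : t 1 ≠ 0
    · -- y = μ • x ; use the triple (x, z, y)
      have hy := solve2 ht1 ht
      have r1 : ⁅x,⁅x,x⁆⁆ + ⁅z,⁅z,x⁆⁆ + ⁅y,⁅y,x⁆⁆ = 0 := by
        linear_combination (norm := module) h1
      have r2 : ⁅x,⁅x,z⁆⁆ + ⁅z,⁅z,z⁆⁆ + ⁅y,⁅y,z⁆⁆ = 0 := by
        linear_combination (norm := module) h3
      have r3 : ⁅x,⁅x,y⁆⁆ + ⁅z,⁅z,y⁆⁆ + ⁅y,⁅y,y⁆⁆ = 0 := by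
        linear_combination (norm := module) h2
      obtain ⟨u, v, hxS, hzS, hyS, hbS⟩ :=
        step2 x z y (-(t 1)⁻¹ * t 0) 0 (by rw [hy]; module) r1 r2 r3
      exact ⟨u, v, hxS, hyS, hzS, hbS⟩
    · push_neg at ht1
      rw [ht1, zero_smul, add_zero] at ht
      have ht0' : t 0 ≠ 0 := by
        intro h00; apply ht0; funext i; fin_cases i <;> assumption
      have hx0 : x = 0 := by
        rcases smul_eq_zero.1 ht with h' | h'
        · exact absurd h' ht0'
        · exact h'
      -- use the triple (y, z, x)
      have r1 : ⁅y,⁅y,y⁆⁆ + ⁅z,⁅z,y⁆⁆ + ⁅x,⁅x,y⁆⁆ = 0 := by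
        linear_combination (norm := module) h2
      have r2 : ⁅y,⁅y,z⁆⁆ + ⁅z,⁅z,z⁆⁆ + ⁅x,⁅x,z⁆⁆ = 0 := by
        linear_combination (norm := module) h3
      have r3 : ⁅y,⁅y,x⁆⁆ + ⁅z,⁅z,x⁆⁆ + ⁅x,⁅x,x⁆⁆ = 0 := by
        linear_combination (norm := module) h1
      obtain ⟨u, v, hyS, hzS, hxS, hbS⟩ :=
        step2 y z x 0 0 (by rw [hx0]; module) r1 r2 r3
      exact ⟨u, v, hxS, hyS, hzS, hbS⟩


omit [CharZero k] in
theorem pair_bracket {u v m n : L2 k} (hm : m ∈ Submodule.span k {u, v})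
    (hn : n ∈ Submodule.span k {u, v}) : ∃ c : k, ⁅m, n⁆ = c • ⁅u, v⁆ := by
  obtain ⟨c1, c2, hm⟩ := Submodule.mem_span_pair.1 hm
  obtain ⟨d1, d2, hn⟩ := Submodule.mem_span_pair.1 hn
  refine ⟨c1 * d2 - c2 * d1, ?_⟩
  rw [← hm, ← hn]
  simp only [add_lie, lie_add, smul_lie, lie_smul, lie_self, smul_zero, add_zero, zero_add,
    ← lie_skew v u]
  module

/-- A Lie algebra in which all double brackets of brackets vanish is solvable. -/
theorem solvable_of_dbl {R L : Type*} [CommRing R] [LieRing L] [LieAlgebra R L]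
    (H : ∀ a b c d : L, ⁅⁅a,b⁆,⁅c,d⁆⁆ = 0) : LieAlgebra.IsSolvable L := by
  let N : LieIdeal R L :=
    { carrier := {n | ∀ a b : L, ⁅⁅a,b⁆,n⁆ = 0}
      add_mem' := fun {p q} hp hq a b => by rw [lie_add, hp a b, hq a b, add_zero]
      zero_mem' := fun a b => lie_zero _
      smul_mem' := fun c {p} hp a b => by rw [lie_smul, hp a b, smul_zero]
      lie_mem := fun {y n} hn a b => by
        rw [leibniz_lie, hn a b, lie_zero, add_zero]
        exact hn ⁅a, b⁆ y }
  have hNmem : ∀ {n : L}, n ∈ N ↔ ∀ a b : L, ⁅⁅a,b⁆,n⁆ = 0 := Iff.rfl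
  let Q : LieIdeal R L :=
    { carrier := {m | ∀ n ∈ N, ⁅m,n⁆ = 0}
      add_mem' := fun {p q} hp hq n hn => by rw [add_lie, hp n hn, hq n hn, add_zero]
      zero_mem' := fun n hn => zero_lie _
      smul_mem' := fun c {p} hp n hn => by rw [smul_lie, hp n hn, smul_zero]
      lie_mem := fun {y m} hm n hn => by
        rw [lie_lie, hm n hn, lie_zero, hm ⁅y,n⁆ (N.lie_mem hn), zero_sub, neg_zero] }
  have hQmem : ∀ {m : L}, m ∈ Q ↔ ∀ n ∈ N, ⁅m,n⁆ = 0 := Iff.rfl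
  have hN : LieAlgebra.derivedSeries R L 1 ≤ N := by
    rw [LieAlgebra.derivedSeries_def, LieAlgebra.derivedSeriesOfIdeal_succ,
      LieAlgebra.derivedSeriesOfIdeal_zero, LieSubmodule.lie_le_iff]
    intro a _ b _
    exact hNmem.2 fun c d => H c d a b
  have hQ : LieAlgebra.derivedSeries R L 1 ≤ Q := by
    rw [LieAlgebra.derivedSeries_def, LieAlgebra.derivedSeriesOfIdeal_succ,
      LieAlgebra.derivedSeriesOfIdeal_zero, LieSubmodule.lie_le_iff]
    intro a _ b _
    exact hQmem.2 fun n hn => hn a b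
  refine LieAlgebra.IsSolvable.mk (R := R) (k := 2) ?_
  have h2 : LieAlgebra.derivedSeries R L 2 =
      ⁅LieAlgebra.derivedSeries R L 1, LieAlgebra.derivedSeries R L 1⁆ := by
    rw [LieAlgebra.derivedSeries_def, LieAlgebra.derivedSeriesOfIdeal_succ]
  rw [h2, LieSubmodule.lie_eq_bot_iff]
  intro x hx m hm
  exact (hQ hx) m (hN hm)

end Ym3Aux

theorem ym3_to_sl2_solvable_image (k : Type*) [Field k] [IsAlgClosed k] [CharZero k]
    (φ : FreeLieAlgebra k (Fin 3) →ₗ⁅k⁆ LieAlgebra.SpecialLinear.sl (Fin 2) k)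
    (hφ : ∀ j : Fin 3, φ (ymRel3 k j) = 0) :
    LieAlgebra.IsSolvable φ.range := by
  classical
  let a : Fin 3 → Ym3Aux.L2 k := fun i => φ (of k i)
  have hrel : ∀ j : Fin 3,
      ⁅a 0, ⁅a 0, a j⁆⁆ + ⁅a 1, ⁅a 1, a j⁆⁆ + ⁅a 2, ⁅a 2, a j⁆⁆ = 0 := by
    intro j
    have h := hφ j
    rw [ymRel3, Fin.sum_univ_three] at h
    show ⁅φ (of k 0), ⁅φ (of k 0), φ (of k j)⁆⁆ + ⁅φ (of k 1), ⁅φ (of k 1), φ (of k j)⁆⁆ +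
      ⁅φ (of k 2), ⁅φ (of k 2), φ (of k j)⁆⁆ = 0
    simpa only [map_add, LieHom.map_lie] using h
  obtain ⟨u, v, hx, hy, hz, hb⟩ := Ym3Aux.main (a 0) (a 1) (a 2) (hrel 0) (hrel 1) (hrel 2)
  let S : LieSubalgebra k (Ym3Aux.L2 k) :=
    { Submodule.span k {u, v} with
      lie_mem' := by
        intro m n hm hn
        obtain ⟨c, hc⟩ := Ym3Aux.pair_bracket hm hn
        rw [hc]
        exact Submodule.smul_mem _ _ hb }
  have hSmem : ∀ {w : Ym3Aux.L2 k}, w ∈ S ↔ w ∈ Submodule.span k {u, v} := Iff.rfl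
  have hmem : ∀ i, a i ∈ S := by
    intro i
    fin_cases i
    exacts [hSmem.2 hx, hSmem.2 hy, hSmem.2 hz]
  have hψ : (S.incl).comp (FreeLieAlgebra.lift k (fun i => (⟨a i, hmem i⟩ : S))) = φ :=
    FreeLieAlgebra.hom_ext fun i => by
      simp [FreeLieAlgebra.lift_of_apply, a]
  have key : ∀ m, φ m ∈ S := by
    intro m
    rw [← hψ]
    exact ((FreeLieAlgebra.lift k (fun i => (⟨a i, hmem i⟩ : S))) m).2
  have hle : φ.range ≤ S := by
    rintro w hw
    obtain ⟨m, rfl⟩ := (LieHom.mem_range _ _).1 hw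
    exact key m
  haveI hS : LieAlgebra.IsSolvable S := by
    apply Ym3Aux.solvable_of_dbl (R := k)
    rintro ⟨m, hm⟩ ⟨n, hn⟩ ⟨o, ho⟩ ⟨q, hq⟩
    obtain ⟨c, hc⟩ := Ym3Aux.pair_bracket (hSmem.1 hm) (hSmem.1 hn)
    obtain ⟨d, hd⟩ := Ym3Aux.pair_bracket (hSmem.1 ho) (hSmem.1 hq)
    apply Subtype.ext
    show ⁅⁅m, n⁆, ⁅o, q⁆⁆ = (0 : Ym3Aux.L2 k)
    rw [hc, hd, smul_lie, lie_smul, lie_self, smul_zero, smul_zero]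
  exact Function.Injective.lieAlgebra_isSolvable (f := LieSubalgebra.inclusion hle)
    (LieSubalgebra.inclusion_injective hle)
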